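/- Let d ≥ 2, let 0 < α ≤ 1, let B₊, B₋ ⊂ ℝ^d be disjoint open balls with |B₊| ≥ |B₋| > 0, and let χ_α be the bang-bang function associated with B₋ and α. Then ((|B₊|^{-1} + α² |B₋|^{-1}) / (|B₊|^{-1-2/d} + α² |B₋|^{-1-2/d})) · λ₁^{χ_α}(B₊ ∪ B₋) ≤ |B|^{2/d} λ₁(B), where B is the open unit ball of ℝ^d. -/

import Mathlib

open MeasureTheory Metric Set Filter

open scoped Classical ENNReal
open scoped NNReal

noncomputable section
set_option maxHeartbeats 1000000

/-- The Rayleigh quotient of `u : ℝ^d → ℝ`. -/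
def rayleigh (d : ℕ) (u : EuclideanSpace ℝ (Fin d) → ℝ) : ℝ :=
  (∫ x, ‖gradient u x‖ ^ 2) / (∫ x, (u x) ^ 2)

/-- A trial function for the Dirichlet eigenvalue on `Ω`: Lipschitz, vanishing outside `Ω`,
and not almost everywhere zero. -/
def IsDirTrial (d : ℕ) (Ω : Set (EuclideanSpace ℝ (Fin d)))
    (u : EuclideanSpace ℝ (Fin d) → ℝ) : Prop :=
  (∃ K, LipschitzWith K u) ∧ (∀ x ∉ Ω, u x = 0) ∧ ¬ (u =ᵐ[volume] fun _ => (0 : ℝ))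

/-- The first Dirichlet eigenvalue of `Ω`. -/
def dirichletEV (d : ℕ) (Ω : Set (EuclideanSpace ℝ (Fin d))) : ℝ :=
  sInf { r | ∃ u, IsDirTrial d Ω u ∧ rayleigh d u = r }

/-- The first twisted eigenvalue of `Ω` with orthogonality constraint `g`. -/
def twistedEV (d : ℕ) (Ω : Set (EuclideanSpace ℝ (Fin d)))
    (g : EuclideanSpace ℝ (Fin d) → ℝ) : ℝ :=
  sInf { r | ∃ u, IsDirTrial d Ω u ∧ (∫ x, u x * g x) = 0 ∧ rayleigh d u = r }

/-- `u` is a minimizer for the first twisted eigenvalue `λ₁^g(Ω)`. -/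
def IsTwistedMin (d : ℕ) (Ω : Set (EuclideanSpace ℝ (Fin d)))
    (g u : EuclideanSpace ℝ (Fin d) → ℝ) : Prop :=
  IsDirTrial d Ω u ∧ (∫ x, u x * g x) = 0 ∧ rayleigh d u = twistedEV d Ω g

/-- The bang-bang function equal to `1` on `Bm` and `α` elsewhere. -/
def chiBang (d : ℕ) (α : ℝ) (Bm : Set (EuclideanSpace ℝ (Fin d))) :
    EuclideanSpace ℝ (Fin d) → ℝ :=
  fun x => if x ∈ Bm then 1 else α

section Aux

variable {d : ℕ}

local notation "E" => EuclideanSpace ℝ (Fin d)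

lemma grad_norm_le {K : ℝ≥0} {f : E → ℝ} (hf : LipschitzWith K f) (x : E) :
    ‖gradient f x‖ ≤ K := by
  unfold gradient
  rw [LinearIsometryEquiv.norm_map]
  exact norm_fderiv_le_of_lipschitz ℝ hf

lemma gradient_congr {f g : E → ℝ} {x : E} (h : f =ᶠ[nhds x] g) :
    gradient f x = gradient g x := by
  unfold gradient
  rw [h.fderiv_eq]

lemma gradient_of_locally_zero {f : E → ℝ} {U : Set E} (hU : IsOpen U) {x : E}
    (hx : x ∈ U) (hf : ∀ y ∈ U, f y = 0) : gradient f x = 0 := by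
  have h : f =ᶠ[nhds x] (fun _ => (0:ℝ)) :=
    Filter.eventuallyEq_of_mem (hU.mem_nhds hx) hf
  unfold gradient
  rw [h.fderiv_eq, fderiv_const_apply]
  simp

lemma measurable_gradient (f : E → ℝ) : Measurable (gradient f) := by
  have : gradient f = fun x => (InnerProductSpace.toDual ℝ E).symm (fderiv ℝ f x) := rfl
  rw [this]
  exact ((InnerProductSpace.toDual ℝ E).symm.continuous.measurable).comp (measurable_fderiv ℝ f)

lemma fderiv_const_mul' {A : ℝ} (hA : A ≠ 0) (f : E → ℝ) (x : E) :
    fderiv ℝ (fun y => A * f y) x = A • fderiv ℝ f x := by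
  by_cases h : DifferentiableAt ℝ f x
  · exact fderiv_const_mul h A
  · have h2 : ¬ DifferentiableAt ℝ (fun y => A * f y) x := by
      intro h2
      have := h2.const_mul A⁻¹
      simp only [← mul_assoc, inv_mul_cancel₀ hA, one_mul] at this
      exact h this
    rw [fderiv_zero_of_not_differentiableAt h, fderiv_zero_of_not_differentiableAt h2, smul_zero]

lemma gradient_const_mul' {A : ℝ} (hA : A ≠ 0) (f : E → ℝ) (x : E) :
    gradient (fun y => A * f y) x = A • gradient f x := by
  unfold gradient
  rw [fderiv_const_mul' hA]
  exact (InnerProductSpace.toDual ℝ E).symm.toLinearIsometry.toLinearMap.map_smul _ _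

lemma integrable_of_bounded_support {f : E → ℝ} (hm : AEStronglyMeasurable f volume)
    {C R : ℝ} (c : E) (hb : ∀ x, |f x| ≤ C) (hs : ∀ x ∉ closedBall c R, f x = 0) :
    Integrable f := by
  have hf : f = (closedBall c R).indicator f := by
    funext x
    by_cases h : x ∈ closedBall c R
    · simp [indicator, h]
    · simp [indicator, h, hs x h]
  rw [hf]
  apply IntegrableOn.integrable_indicator _ measurableSet_closedBall
  apply Measure.integrableOn_of_bounded (M := C) measure_closedBall_lt_top.ne hm
  filter_upwards with x
  rw [Real.norm_eq_abs]; exact hb x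

lemma sq_integral_pos {f : E → ℝ} {K : ℝ≥0} (hlip : LipschitzWith K f)
    {c : E} {R : ℝ} (hs : ∀ x ∉ ball c R, f x = 0)
    (hne : ¬ (f =ᵐ[volume] fun _ => (0:ℝ))) :
    0 < ∫ x, (f x) ^ 2 := by
  have hcont : Continuous f := hlip.continuous
  have hint : Integrable (fun x => (f x) ^ 2) := by
    apply Continuous.integrable_of_hasCompactSupport (by fun_prop)
    apply HasCompactSupport.of_support_subset_isCompact (isCompact_closedBall c R)
    intro x hx
    by_contra h
    exact hx (by simp [pow_eq_zero_iff, hs x (fun hb => h (ball_subset_closedBall hb))])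
  rcases (lt_or_eq_of_le (integral_nonneg (f := fun x => (f x) ^ 2) (fun x => sq_nonneg (f x)))) with h | h
  · exact h
  · exfalso
    apply hne
    have := (integral_eq_zero_iff_of_nonneg (fun x => sq_nonneg (f x)) hint).1 h.symm
    filter_upwards [this] with x hx
    simpa [pow_eq_zero_iff] using hx

lemma hasFDerivAt_affine {r : ℝ} (c x : E) :
    HasFDerivAt (fun y : E => r⁻¹ • (y - c)) (r⁻¹ • ContinuousLinearMap.id ℝ E) x :=
  ((hasFDerivAt_id x).sub_const c).const_smul r⁻¹

lemma fderiv_comp_affine {r : ℝ} (hr : r ≠ 0) (c : E) (v : E → ℝ) (x : E) :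
    fderiv ℝ (fun y => v (r⁻¹ • (y - c))) x = r⁻¹ • fderiv ℝ v (r⁻¹ • (x - c)) := by
  by_cases h : DifferentiableAt ℝ v (r⁻¹ • (x - c))
  · have h2 := (h.hasFDerivAt.comp x (hasFDerivAt_affine c x)).fderiv
    rw [Function.comp_def] at h2
    rw [h2]
    ext w
    simp [mul_comm]
  · have h2 : ¬ DifferentiableAt ℝ (fun y => v (r⁻¹ • (y - c))) x := by
      intro h2
      have hcomp : ((fun z => v (r⁻¹ • (z - c))) ∘ fun y : E => r • y + c) = v := by
        funext y
        simp only [Function.comp, add_sub_cancel_right, smul_smul, inv_mul_cancel₀ hr, one_smul]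
      have hfp : r • (r⁻¹ • (x - c)) + c = x := by
        rw [smul_smul, mul_inv_cancel₀ hr, one_smul, sub_add_cancel]
      have h3 := DifferentiableAt.comp (g := fun z => v (r⁻¹ • (z - c)))
          (f := fun y : E => r • y + c) (r⁻¹ • (x - c))
          (by simpa only [hfp] using h2) ((differentiableAt_id.const_smul r).add_const c)
      rw [hcomp] at h3
      exact h h3
    rw [fderiv_zero_of_not_differentiableAt h, fderiv_zero_of_not_differentiableAt h2, smul_zero]

lemma gradient_comp_affine {r : ℝ} (hr : r ≠ 0) (c : E) (v : E → ℝ) (x : E) :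
    gradient (fun y => v (r⁻¹ • (y - c))) x = r⁻¹ • gradient v (r⁻¹ • (x - c)) := by
  unfold gradient
  rw [fderiv_comp_affine hr]
  exact (InnerProductSpace.toDual ℝ E).symm.toLinearIsometry.toLinearMap.map_smul _ _

lemma integral_comp_affine {r : ℝ} (hr : 0 < r) (c : E) (f : E → ℝ) :
    ∫ x, f (r⁻¹ • (x - c)) = r ^ d * ∫ x, f x := by
  have h1 : ∀ x : E, f (r⁻¹ • (x - c)) = (fun y : E => f (r⁻¹ • y)) (x + (-c)) := by
    intro x; simp [sub_eq_add_neg]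
  simp_rw [h1]
  rw [integral_add_right_eq_self (μ := volume) (fun y : E => f (r⁻¹ • y)) (-c)]
  rw [Measure.integral_comp_inv_smul_of_nonneg (volume : Measure E) f hr.le]
  simp [finrank_euclideanSpace_fin]

lemma scaled_lip {K : ℝ≥0} {v : E → ℝ} {r : ℝ} (hr : 0 < r) (c : E) (hK : LipschitzWith K v) :
    LipschitzWith (K * ‖r⁻¹‖₊) (fun x : E => v (r⁻¹ • (x - c))) := by
  have hT : LipschitzWith ‖r⁻¹‖₊ (fun x : E => r⁻¹ • (x - c)) := by
    apply LipschitzWith.of_dist_le_mul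
    intro x y
    rw [dist_eq_norm, ← smul_sub, sub_sub_sub_cancel_right, norm_smul, dist_eq_norm]
    simp
  exact hK.comp hT

lemma scaled_zero {v : E → ℝ} {r : ℝ} (hr : 0 < r) (c : E)
    (hv0 : ∀ x ∉ ball (0:E) 1, v x = 0) :
    ∀ x ∉ ball c r, v (r⁻¹ • (x - c)) = 0 := by
  intro x hx
  apply hv0
  simp only [mem_ball, dist_zero_right, not_lt] at *
  rw [norm_smul, norm_inv, Real.norm_eq_abs, abs_of_pos hr]
  have h2 : r⁻¹ * r ≤ r⁻¹ * ‖x - c‖ := by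
    apply mul_le_mul_of_nonneg_left _ (inv_nonneg.2 hr.le)
    rw [← dist_eq_norm]; exact hx
  rwa [inv_mul_cancel₀ hr.ne'] at h2

lemma scaled_grad_zero {v : E → ℝ} {r : ℝ} (hr : 0 < r) (c : E)
    (hv0 : ∀ x ∉ ball (0:E) 1, v x = 0) :
    ∀ x ∉ closedBall c r, gradient (fun y : E => v (r⁻¹ • (y - c))) x = 0 := by
  intro x hx
  apply gradient_of_locally_zero isClosed_closedBall.isOpen_compl hx
  intro y hy
  exact scaled_zero hr c hv0 y (fun h => hy (ball_subset_closedBall h))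

lemma scaled_integral {v : E → ℝ} {r : ℝ} (hr : 0 < r) (c : E) :
    ∫ x, v (r⁻¹ • (x - c)) = r ^ d * ∫ x, v x :=
  integral_comp_affine hr c v

lemma scaled_integral_sq {v : E → ℝ} {r : ℝ} (hr : 0 < r) (c : E) :
    ∫ x, (v (r⁻¹ • (x - c))) ^ 2 = r ^ d * ∫ x, (v x) ^ 2 :=
  integral_comp_affine hr c (fun y => (v y) ^ 2)

lemma scaled_integral_grad {v : E → ℝ} {r : ℝ} (hr : 0 < r) (c : E) :
    ∫ x, ‖gradient (fun y : E => v (r⁻¹ • (y - c))) x‖ ^ 2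
      = r ^ d * (r ^ 2)⁻¹ * ∫ x, ‖gradient v x‖ ^ 2 := by
  have h1 : ∀ x : E, ‖gradient (fun y : E => v (r⁻¹ • (y - c))) x‖ ^ 2
      = (r^2)⁻¹ * (fun y : E => ‖gradient v y‖ ^ 2) (r⁻¹ • (x - c)) := by
    intro x
    rw [gradient_comp_affine hr.ne' c v x, norm_smul, mul_pow, norm_inv, Real.norm_eq_abs,
      abs_of_pos hr, inv_pow]
  simp_rw [h1]
  rw [MeasureTheory.integral_const_mul]
  have h2 := integral_comp_affine hr c (fun y : E => ‖gradient v y‖ ^ 2)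
  rw [h2]
  ring

lemma scaled_integrable {K : ℝ≥0} {v : E → ℝ} {r : ℝ} (hr : 0 < r) (c : E)
    (hK : LipschitzWith K v) (hv0 : ∀ x ∉ ball (0:E) 1, v x = 0) :
    Integrable (fun x : E => v (r⁻¹ • (x - c))) := by
  apply Continuous.integrable_of_hasCompactSupport ((scaled_lip hr c hK).continuous)
  apply HasCompactSupport.of_support_subset_isCompact (isCompact_closedBall c r)
  intro x hx
  by_contra h
  exact hx (scaled_zero hr c hv0 x (fun hb => h (ball_subset_closedBall hb)))

lemma scaled_integrable_sq {K : ℝ≥0} {v : E → ℝ} {r : ℝ} (hr : 0 < r) (c : E)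
    (hK : LipschitzWith K v) (hv0 : ∀ x ∉ ball (0:E) 1, v x = 0) :
    Integrable (fun x : E => (v (r⁻¹ • (x - c))) ^ 2) := by
  apply Continuous.integrable_of_hasCompactSupport
    (((scaled_lip hr c hK).continuous).pow 2)
  apply HasCompactSupport.of_support_subset_isCompact (isCompact_closedBall c r)
  intro x hx
  by_contra h
  apply hx
  simp [scaled_zero hr c hv0 x (fun hb => h (ball_subset_closedBall hb))]

lemma scaled_integrable_grad {K : ℝ≥0} {v : E → ℝ} {r : ℝ} (hr : 0 < r) (c : E)
    (hK : LipschitzWith K v) (hv0 : ∀ x ∉ ball (0:E) 1, v x = 0) :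
    Integrable (fun x : E => ‖gradient (fun y : E => v (r⁻¹ • (y - c))) x‖ ^ 2) := by
  apply integrable_of_bounded_support (C := (((K * ‖r⁻¹‖₊ : ℝ≥0) : ℝ))^2) (R := r) (c := c)
  case hm =>
    exact ((measurable_gradient (fun y : E => v (r⁻¹ • (y - c)))).norm.pow_const
      2).aestronglyMeasurable
  case hb =>
    intro x
    rw [abs_of_nonneg (by positivity)]
    have h1 := grad_norm_le (scaled_lip hr c hK) x
    have h0 : (0:ℝ) ≤ ‖gradient (fun y : E => v (r⁻¹ • (y - c))) x‖ := norm_nonneg _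
    nlinarith
  case hs =>
    intro x hx
    rw [scaled_grad_zero hr c hv0 x hx]
    simp

lemma nontrivial_E (hd : 1 ≤ d) : Nontrivial (EuclideanSpace ℝ (Fin d)) := by
  have i : Fin d := ⟨0, by omega⟩
  refine ⟨EuclideanSpace.single i 1, 0, fun h => ?_⟩
  have h1 : (EuclideanSpace.single i (1:ℝ)) i = (0 : EuclideanSpace ℝ (Fin d)) i := by rw [h]
  simp [EuclideanSpace.single_apply] at h1

lemma bump_exists :
    ∃ v : E → ℝ, LipschitzWith 1 v ∧ (∀ x ∉ ball (0:E) 1, v x = 0) ∧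
      ¬ (v =ᵐ[volume] fun _ => (0:ℝ)) := by
  refine ⟨fun x => max (1 - dist x 0) 0, ?_, ?_, ?_⟩
  · have h1 : LipschitzWith 1 (fun x : E => 1 - dist x 0) := by
      apply LipschitzWith.of_dist_le_mul
      intro x y
      rw [Real.dist_eq, show (1 - dist x 0) - (1 - dist y 0) = dist y 0 - dist x 0 by ring]
      simpa [dist_comm] using abs_dist_sub_le y x 0
    have h2 : LipschitzWith 1 (fun _ : E => (0:ℝ)) :=
      (LipschitzWith.const (0:ℝ)).weaken (by norm_num)
    simpa using h1.max h2
  · intro x hx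
    simp only [mem_ball, dist_zero_right, not_lt] at hx
    show max (1 - dist x 0) 0 = 0
    rw [max_eq_right]
    rw [dist_zero_right]
    linarith
  · intro h
    have hsub : ball (0:E) (1/2) ⊆ {x | ¬ (fun x => max (1 - dist x 0) 0) x = (0:ℝ)} := by
      intro x hx
      simp only [mem_ball, dist_zero_right] at hx
      simp only [mem_setOf_eq]
      have h3 : (1:ℝ)/2 ≤ 1 - dist x 0 := by rw [dist_zero_right]; linarith
      have h4 : max (1 - dist x 0) 0 ≥ 1/2 := le_trans h3 (le_max_left _ _)
      intro h0
      rw [h0] at h4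
      linarith
    have h0 := h
    rw [EventuallyEq, ae_iff] at h0
    have := measure_mono_null hsub h0
    exact (measure_ball_pos volume (0:E) (by norm_num : (0:ℝ) < 1/2)).ne' this

lemma rpow_key {r ω : ℝ} (hr : 0 < r) (hω : 0 < ω) (hd : d ≠ 0) :
    ((r ^ d * ω) : ℝ) ^ (-(1:ℝ) - 2/d)
      = (r ^ d)⁻¹ * (r ^ 2)⁻¹ * (ω⁻¹ * (ω ^ ((2:ℝ)/d))⁻¹) := by
  have hrd : (0:ℝ) < r ^ d := pow_pos hr d
  rw [Real.mul_rpow hrd.le hω.le]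
  have h1 : ((r ^ d : ℝ)) ^ (-(1:ℝ) - 2/d) = (r ^ d)⁻¹ * (r ^ 2)⁻¹ := by
    have hd' : (d:ℝ) ≠ 0 := Nat.cast_ne_zero.2 hd
    rw [← Real.rpow_natCast r d, ← Real.rpow_mul hr.le]
    have he : (d : ℝ) * (-(1:ℝ) - 2/d) = (-(d:ℝ)) + (-(2:ℝ)) := by field_simp; ring
    rw [he, Real.rpow_add hr, Real.rpow_neg hr.le, Real.rpow_neg hr.le, Real.rpow_natCast]
    congr 1
    rw [show ((2:ℝ)) = ((2:ℕ):ℝ) by norm_num, Real.rpow_natCast]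
  have h2 : ω ^ (-(1:ℝ) - 2/d) = ω⁻¹ * (ω ^ ((2:ℝ)/d))⁻¹ := by
    rw [show (-(1:ℝ) - 2/d) = (-1) + (-(2/d)) by ring, Real.rpow_add hω,
      Real.rpow_neg_one, Real.rpow_neg hω.le]
  rw [h1, h2]

lemma rayleigh_nonneg (d : ℕ) (u : EuclideanSpace ℝ (Fin d) → ℝ) : 0 ≤ rayleigh d u :=
  div_nonneg (integral_nonneg fun x => by positivity) (integral_nonneg fun x => sq_nonneg _)

lemma algebra_key {α P M p2 m2 ω W F G : ℝ} (hα : 0 < α) (hP : 0 < P) (hM : 0 < M)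
    (hp2 : 0 < p2) (hm2 : 0 < m2) (hω : 0 < ω) (hW : 0 < W) (hF : 0 < F) :
    ((P * ω)⁻¹ + α ^ 2 * (M * ω)⁻¹) /
        (P⁻¹ * p2⁻¹ * (ω⁻¹ * W⁻¹) + α ^ 2 * (M⁻¹ * m2⁻¹ * (ω⁻¹ * W⁻¹))) *
      ((M ^ 2 * (P * p2⁻¹ * G) + (α * P) ^ 2 * (M * m2⁻¹ * G)) /
        (M ^ 2 * (P * F) + (α * P) ^ 2 * (M * F)))
      = W * (G / F) := by
  have hden2 : 0 < M ^ 2 * (P * F) + (α * P) ^ 2 * (M * F) := by positivity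
  have hden1 : 0 < P⁻¹ * p2⁻¹ * (ω⁻¹ * W⁻¹) + α ^ 2 * (M⁻¹ * m2⁻¹ * (ω⁻¹ * W⁻¹)) := by
    positivity
  field_simp

end Aux


lemma key_bound (d : ℕ) (hd : 2 ≤ d) (α : ℝ) (hα0 : 0 < α)
    (cp cm : EuclideanSpace ℝ (Fin d)) (rp rm : ℝ) (hrp : 0 < rp) (hrm : 0 < rm)
    (hdisj : Disjoint (ball cp rp) (ball cm rm))
    (v : EuclideanSpace ℝ (Fin d) → ℝ) (hv : IsDirTrial d (ball 0 1) v) :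
    ((volume (ball cp rp)).toReal⁻¹ + α ^ 2 * (volume (ball cm rm)).toReal⁻¹) /
        ((volume (ball cp rp)).toReal ^ (-(1 : ℝ) - 2 / d) +
          α ^ 2 * (volume (ball cm rm)).toReal ^ (-(1 : ℝ) - 2 / d)) *
      twistedEV d (ball cp rp ∪ ball cm rm) (chiBang d α (ball cm rm)) ≤
    (volume (ball (0 : EuclideanSpace ℝ (Fin d)) 1)).toReal ^ ((2 : ℝ) / d) *
      rayleigh d v := by
  obtain ⟨⟨K, hK⟩, hv0, hvne⟩ := hv
  have hdne : d ≠ 0 := by omega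
  set ω : ℝ := (volume (ball (0 : EuclideanSpace ℝ (Fin d)) 1)).toReal with hω_def
  have hω : 0 < ω :=
    ENNReal.toReal_pos (measure_ball_pos volume _ one_pos).ne' measure_ball_lt_top.ne
  have hW : 0 < ω ^ ((2:ℝ)/d) := Real.rpow_pos_of_pos hω _
  -- volumes of the two balls
  have hVp : (volume (ball cp rp)).toReal = rp ^ d * ω := by
    rw [Measure.addHaar_ball_of_pos volume cp hrp, finrank_euclideanSpace_fin,
      ENNReal.toReal_mul, ENNReal.toReal_ofReal (by positivity)]
  have hVm : (volume (ball cm rm)).toReal = rm ^ d * ω := by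
    rw [Measure.addHaar_ball_of_pos volume cm hrm, finrank_euclideanSpace_fin,
      ENNReal.toReal_mul, ENNReal.toReal_ofReal (by positivity)]
  -- data of the trial function v
  set F : ℝ := ∫ x, (v x) ^ 2 with hF_def
  set G : ℝ := ∫ x, ‖gradient v x‖ ^ 2 with hG_def
  have hF : 0 < F := sq_integral_pos hK hv0 hvne
  -- the rescaled trial functions
  set up : EuclideanSpace ℝ (Fin d) → ℝ := fun x => v (rp⁻¹ • (x - cp)) with hup_def
  set um : EuclideanSpace ℝ (Fin d) → ℝ := fun x => v (rm⁻¹ • (x - cm)) with hum_def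
  set a : ℝ := rm ^ d with ha_def
  set b : ℝ := -(α * rp ^ d) with hb_def
  have ha : a ≠ 0 := by rw [ha_def]; positivity
  have hb : b ≠ 0 := by
    rw [hb_def]
    have : 0 < α * rp ^ d := by positivity
    exact neg_ne_zero.2 this.ne'
  set u : EuclideanSpace ℝ (Fin d) → ℝ := fun x => a * up x + b * um x with hu_def
  have hup0 : ∀ x ∉ ball cp rp, up x = 0 := scaled_zero hrp cp hv0
  have hum0 : ∀ x ∉ ball cm rm, um x = 0 := scaled_zero hrm cm hv0
  have hupg0 : ∀ x ∉ closedBall cp rp, gradient up x = 0 := scaled_grad_zero hrp cp hv0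
  have humg0 : ∀ x ∉ closedBall cm rm, gradient um x = 0 := scaled_grad_zero hrm cm hv0
  have hupI : Integrable up := scaled_integrable hrp cp hK hv0
  have humI : Integrable um := scaled_integrable hrm cm hK hv0
  have hupI2 : Integrable (fun x => (up x) ^ 2) := scaled_integrable_sq hrp cp hK hv0
  have humI2 : Integrable (fun x => (um x) ^ 2) := scaled_integrable_sq hrm cm hK hv0
  have hupIg : Integrable (fun x => ‖gradient up x‖ ^ 2) := scaled_integrable_grad hrp cp hK hv0
  have humIg : Integrable (fun x => ‖gradient um x‖ ^ 2) := scaled_integrable_grad hrm cm hK hv0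
  have hupint : ∫ x, up x = rp ^ d * ∫ x, v x := scaled_integral hrp cp
  have humint : ∫ x, um x = rm ^ d * ∫ x, v x := scaled_integral hrm cm
  have hupint2 : ∫ x, (up x) ^ 2 = rp ^ d * F := scaled_integral_sq hrp cp
  have humint2 : ∫ x, (um x) ^ 2 = rm ^ d * F := scaled_integral_sq hrm cm
  have hupintg : ∫ x, ‖gradient up x‖ ^ 2 = rp ^ d * (rp ^ 2)⁻¹ * G :=
    scaled_integral_grad hrp cp
  have humintg : ∫ x, ‖gradient um x‖ ^ 2 = rm ^ d * (rm ^ 2)⁻¹ * G :=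
    scaled_integral_grad hrm cm
  -- the combined function u
  have hpm : ∀ x, up x * um x = 0 := by
    intro x
    by_cases hx : x ∈ ball cp rp
    · rw [hum0 x (Set.disjoint_left.1 hdisj hx), mul_zero]
    · rw [hup0 x hx, zero_mul]
  have hu0 : ∀ x ∉ ball cp rp ∪ ball cm rm, u x = 0 := by
    intro x hx
    rw [hu_def]
    simp only
    rw [hup0 x (fun h => hx (Or.inl h)), hum0 x (fun h => hx (Or.inr h))]
    ring
  have hu_lip : ∃ K' : ℝ≥0, LipschitzWith K' u := by
    refine ⟨‖a‖₊ * (K * ‖rp⁻¹‖₊) + ‖b‖₊ * (K * ‖rm⁻¹‖₊), ?_⟩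
    exact ((lipschitzWith_smul a).comp (scaled_lip hrp cp hK)).add
      ((lipschitzWith_smul b).comp (scaled_lip hrm cm hK))
  -- L² norm of u
  have hu_sq : ∀ x, (u x) ^ 2 = a ^ 2 * (up x) ^ 2 + b ^ 2 * (um x) ^ 2 := by
    intro x
    rw [hu_def]
    simp only
    linear_combination (2 * a * b) * hpm x
  have hIu2 : ∫ x, (u x) ^ 2 = a ^ 2 * (rp ^ d * F) + b ^ 2 * (rm ^ d * F) := by
    simp_rw [hu_sq]
    rw [integral_add (hupI2.const_mul _) (humI2.const_mul _), MeasureTheory.integral_const_mul,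
      MeasureTheory.integral_const_mul, hupint2, humint2]
  -- orthogonality
  have hu_orth : ∫ x, u x * chiBang d α (ball cm rm) x = 0 := by
    have hchi : ∀ x, u x * chiBang d α (ball cm rm) x = (a * α) * up x + b * um x := by
      intro x
      rw [hu_def]
      simp only [chiBang]
      by_cases hx : x ∈ ball cm rm
      · rw [if_pos hx, hup0 x (Set.disjoint_right.1 hdisj hx)]
        ring
      · rw [if_neg hx, hum0 x hx]
        ring
    simp_rw [hchi]
    rw [integral_add (hupI.const_mul _) (humI.const_mul _), MeasureTheory.integral_const_mul,
      MeasureTheory.integral_const_mul, hupint, humint, ha_def, hb_def]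
    ring
  -- gradient of u
  haveI : Nontrivial (EuclideanSpace ℝ (Fin d)) := nontrivial_E (by omega)
  have hae : ∀ᵐ x ∂(volume : Measure (EuclideanSpace ℝ (Fin d))),
      x ∉ sphere cp rp ∪ sphere cm rm := by
    have hS : volume (sphere cp rp ∪ sphere cm rm) = 0 :=
      measure_union_null (Measure.addHaar_sphere volume cp rp)
        (Measure.addHaar_sphere volume cm rm)
    exact measure_eq_zero_iff_ae_notMem.1 hS
  have hu_grad : ∀ᵐ x ∂(volume : Measure (EuclideanSpace ℝ (Fin d))),
      ‖gradient u x‖ ^ 2 = a ^ 2 * ‖gradient up x‖ ^ 2 + b ^ 2 * ‖gradient um x‖ ^ 2 := by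
    filter_upwards [hae] with x hx
    have hxs : x ∉ sphere cp rp ∧ x ∉ sphere cm rm :=
      ⟨fun h => hx (Or.inl h), fun h => hx (Or.inr h)⟩
    by_cases hxp : x ∈ ball cp rp
    · have e1 : gradient u x = a • gradient up x := by
        have heq : u =ᶠ[nhds x] (fun y => a * up y) := by
          filter_upwards [isOpen_ball.mem_nhds hxp] with y hy
          rw [hu_def]
          simp only
          rw [hum0 y (Set.disjoint_left.1 hdisj hy)]
          ring
        rw [gradient_congr heq, gradient_const_mul' ha up x]
      have e2 : gradient um x = 0 :=
        gradient_of_locally_zero isOpen_ball hxp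
          (fun y hy => hum0 y (Set.disjoint_left.1 hdisj hy))
      rw [e1, e2, norm_smul, mul_pow, Real.norm_eq_abs, sq_abs]
      simp
    · by_cases hxm : x ∈ ball cm rm
      · have e1 : gradient u x = b • gradient um x := by
          have heq : u =ᶠ[nhds x] (fun y => b * um y) := by
            filter_upwards [isOpen_ball.mem_nhds hxm] with y hy
            rw [hu_def]
            simp only
            rw [hup0 y (Set.disjoint_right.1 hdisj hy)]
            ring
          rw [gradient_congr heq, gradient_const_mul' hb um x]
        have e2 : gradient up x = 0 :=
          gradient_of_locally_zero isOpen_ball hxm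
            (fun y hy => hup0 y (Set.disjoint_right.1 hdisj hy))
        rw [e1, e2, norm_smul, mul_pow, Real.norm_eq_abs, sq_abs]
        simp
      · have hcp : x ∉ closedBall cp rp := by
          rw [← ball_union_sphere]
          rintro (h | h)
          exacts [hxp h, hxs.1 h]
        have hcm : x ∉ closedBall cm rm := by
          rw [← ball_union_sphere]
          rintro (h | h)
          exacts [hxm h, hxs.2 h]
        have hUopen : IsOpen ((closedBall cp rp)ᶜ ∩ (closedBall cm rm)ᶜ) :=
          (isClosed_closedBall.isOpen_compl).inter (isClosed_closedBall.isOpen_compl)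
        have e0 : gradient u x = 0 := by
          apply gradient_of_locally_zero hUopen ⟨hcp, hcm⟩
          intro y hy
          rw [hu_def]
          simp only
          rw [hup0 y (fun h => hy.1 (ball_subset_closedBall h)),
            hum0 y (fun h => hy.2 (ball_subset_closedBall h))]
          ring
        rw [e0, hupg0 x hcp, humg0 x hcm]
        simp
  have hIgrad : ∫ x, ‖gradient u x‖ ^ 2
      = a ^ 2 * (rp ^ d * (rp ^ 2)⁻¹ * G) + b ^ 2 * (rm ^ d * (rm ^ 2)⁻¹ * G) := by
    rw [integral_congr_ae hu_grad,
      integral_add (hupIg.const_mul _) (humIg.const_mul _), MeasureTheory.integral_const_mul,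
      MeasureTheory.integral_const_mul, hupintg, humintg]
  -- u is not a.e. zero
  have hIu2pos : 0 < ∫ x, (u x) ^ 2 := by
    rw [hIu2]
    have h1 : 0 < a ^ 2 := by rw [ha_def]; positivity
    have h2 : 0 < b ^ 2 := by rw [hb_def]; positivity
    have h3 : 0 < rp ^ d := pow_pos hrp d
    have h4 : 0 < rm ^ d := pow_pos hrm d
    positivity
  have hu_ne : ¬ (u =ᵐ[volume] fun _ => (0:ℝ)) := by
    intro h
    have h2 : (fun x => (u x) ^ 2) =ᵐ[volume] (fun _ => (0:ℝ)) := by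
      filter_upwards [h] with x hx
      simp [hx]
    rw [integral_congr_ae h2, integral_zero] at hIu2pos
    exact lt_irrefl 0 hIu2pos
  -- the twisted eigenvalue is at most the Rayleigh quotient of u
  have hbdd : BddBelow { r | ∃ w, IsDirTrial d (ball cp rp ∪ ball cm rm) w ∧
      (∫ x, w x * chiBang d α (ball cm rm) x) = 0 ∧ rayleigh d w = r } := by
    refine ⟨0, ?_⟩
    rintro s ⟨w, _, _, rfl⟩
    exact rayleigh_nonneg d w
  have htle : twistedEV d (ball cp rp ∪ ball cm rm) (chiBang d α (ball cm rm))
      ≤ rayleigh d u := by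
    apply csInf_le hbdd
    simp only [Set.mem_setOf_eq]
    exact ⟨u, ⟨hu_lip, hu0, hu_ne⟩, hu_orth, rfl⟩
  have htnonneg : 0 ≤ twistedEV d (ball cp rp ∪ ball cm rm) (chiBang d α (ball cm rm)) := by
    apply le_csInf ⟨rayleigh d u, by
      simp only [Set.mem_setOf_eq]
      exact ⟨u, ⟨hu_lip, hu0, hu_ne⟩, hu_orth, rfl⟩⟩
    rintro s ⟨w, _, _, rfl⟩
    exact rayleigh_nonneg d w
  -- value of the Rayleigh quotient of u
  have hray : rayleigh d u
      = (a ^ 2 * (rp ^ d * (rp ^ 2)⁻¹ * G) + b ^ 2 * (rm ^ d * (rm ^ 2)⁻¹ * G)) /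
        (a ^ 2 * (rp ^ d * F) + b ^ 2 * (rm ^ d * F)) := by
    unfold rayleigh
    rw [hIgrad, hIu2]
  have hrayv : rayleigh d v = G / F := rfl
  -- final computation
  rw [hrayv, hVp, hVm, rpow_key hrp hω hdne, rpow_key hrm hω hdne]
  have hCpos : 0 < ((rp ^ d * ω)⁻¹ + α ^ 2 * (rm ^ d * ω)⁻¹) /
      ((rp ^ d)⁻¹ * (rp ^ 2)⁻¹ * (ω⁻¹ * (ω ^ ((2:ℝ)/d))⁻¹) +
        α ^ 2 * ((rm ^ d)⁻¹ * (rm ^ 2)⁻¹ * (ω⁻¹ * (ω ^ ((2:ℝ)/d))⁻¹))) := by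
    have h3 : 0 < rp ^ d := pow_pos hrp d
    have h4 : 0 < rm ^ d := pow_pos hrm d
    positivity
  calc ((rp ^ d * ω)⁻¹ + α ^ 2 * (rm ^ d * ω)⁻¹) /
      ((rp ^ d)⁻¹ * (rp ^ 2)⁻¹ * (ω⁻¹ * (ω ^ ((2:ℝ)/d))⁻¹) +
        α ^ 2 * ((rm ^ d)⁻¹ * (rm ^ 2)⁻¹ * (ω⁻¹ * (ω ^ ((2:ℝ)/d))⁻¹))) *
      twistedEV d (ball cp rp ∪ ball cm rm) (chiBang d α (ball cm rm))
      ≤ ((rp ^ d * ω)⁻¹ + α ^ 2 * (rm ^ d * ω)⁻¹) /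
      ((rp ^ d)⁻¹ * (rp ^ 2)⁻¹ * (ω⁻¹ * (ω ^ ((2:ℝ)/d))⁻¹) +
        α ^ 2 * ((rm ^ d)⁻¹ * (rm ^ 2)⁻¹ * (ω⁻¹ * (ω ^ ((2:ℝ)/d))⁻¹))) * rayleigh d u :=
        mul_le_mul_of_nonneg_left htle hCpos.le
    _ = ω ^ ((2:ℝ)/d) * (G / F) := by
        rw [hray]
        have hb2 : b ^ 2 = (α * rp ^ d) ^ 2 := by rw [hb_def]; ring
        have ha2 : a ^ 2 = (rm ^ d) ^ 2 := by rw [ha_def]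
        rw [hb2, ha2]
        exact algebra_key hα0 (pow_pos hrp d) (pow_pos hrm d)
          (pow_pos hrp 2) (pow_pos hrm 2) hω hW hF


/-- an upper bound for the twisted eigenvalue of two disjoint balls with a
bang-bang constraint, in terms of the first Dirichlet eigenvalue of a ball. -/
theorem stmt10 (d : ℕ) (hd : 2 ≤ d) (α : ℝ) (hα0 : 0 < α) (hα1 : α ≤ 1)
    (cp cm : EuclideanSpace ℝ (Fin d)) (rp rm : ℝ) (hrp : 0 < rp) (hrm : 0 < rm)
    (hdisj : Disjoint (ball cp rp) (ball cm rm))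
    (hmeas : volume (ball cm rm) ≤ volume (ball cp rp)) :
    ((volume (ball cp rp)).toReal⁻¹ + α ^ 2 * (volume (ball cm rm)).toReal⁻¹) /
        ((volume (ball cp rp)).toReal ^ (-(1 : ℝ) - 2 / d) +
          α ^ 2 * (volume (ball cm rm)).toReal ^ (-(1 : ℝ) - 2 / d)) *
      twistedEV d (ball cp rp ∪ ball cm rm) (chiBang d α (ball cm rm)) ≤
    (volume (ball (0 : EuclideanSpace ℝ (Fin d)) 1)).toReal ^ ((2 : ℝ) / d) *
      dirichletEV d (ball (0 : EuclideanSpace ℝ (Fin d)) 1) := by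
  obtain ⟨v₀, hlip, hz, hne⟩ := bump_exists (d := d)
  set C : ℝ := ((volume (ball cp rp)).toReal⁻¹ + α ^ 2 * (volume (ball cm rm)).toReal⁻¹) /
      ((volume (ball cp rp)).toReal ^ (-(1 : ℝ) - 2 / d) +
        α ^ 2 * (volume (ball cm rm)).toReal ^ (-(1 : ℝ) - 2 / d)) with hC_def
  set T : ℝ := twistedEV d (ball cp rp ∪ ball cm rm) (chiBang d α (ball cm rm)) with hT_def
  set W : ℝ := (volume (ball (0 : EuclideanSpace ℝ (Fin d)) 1)).toReal ^ ((2 : ℝ) / d)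
    with hW_def
  have hW : 0 < W := by
    rw [hW_def]
    apply Real.rpow_pos_of_pos
    exact ENNReal.toReal_pos (measure_ball_pos volume _ one_pos).ne' measure_ball_lt_top.ne
  have hkey : ∀ w, IsDirTrial d (ball (0 : EuclideanSpace ℝ (Fin d)) 1) w →
      C * T ≤ W * rayleigh d w := fun w hw =>
    key_bound d hd α hα0 cp cm rp rm hrp hrm hdisj w hw
  have h2 : ∀ s ∈ {r | ∃ u, IsDirTrial d (ball (0 : EuclideanSpace ℝ (Fin d)) 1) u ∧
      rayleigh d u = r}, C * T / W ≤ s := by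
    rintro s ⟨w, hw, rfl⟩
    rw [div_le_iff₀ hW]
    have := hkey w hw
    linarith
  have h3 : C * T / W ≤ sInf {r | ∃ u, IsDirTrial d (ball (0 : EuclideanSpace ℝ (Fin d)) 1) u ∧
      rayleigh d u = r} := by
    apply le_csInf _ h2
    refine ⟨rayleigh d v₀, ?_⟩
    simp only [Set.mem_setOf_eq]
    exact ⟨v₀, ⟨⟨1, hlip⟩, hz, hne⟩, rfl⟩
  have h4 : dirichletEV d (ball (0 : EuclideanSpace ℝ (Fin d)) 1)
      = sInf {r | ∃ u, IsDirTrial d (ball (0 : EuclideanSpace ℝ (Fin d)) 1) u ∧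
        rayleigh d u = r} := rfl
  rw [h4]
  have h5 := (div_le_iff₀ hW).1 h3
  linarith
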